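/- arXiv:2009.04977 — 6 statements merged into one kernel-verified Lean document; each statement's English description precedes it below -/
import Mathlib

section
/- For the hit-and-run top-to-random single-card Markov chain K on {1,...,n}, defined by K(i,j) = (1/n)∑_{k≥j} 1/k + (i-1)/n if i=j, K(i,j) = (1/n)∑_{k≥i} 1/k if j<i, and K(i,j) = (1/n)∑_{k≥j} 1/k if j>i, the vector Ψ_i with entries Ψ_i(l) = -1/(n-i) for l ≤ n-i, Ψ_i(n-i+1) = 1, and Ψ_i(l) = 0 for l > n-i+1, is an eigenvector of K with eigenvalue 1 - i/n, for each i = 1,...,n-1. -/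
open Finset

lemma Sbot (n a : ℕ) (h2 : a ≤ n) :
    ∑ k ∈ Icc a n, 1/(k:ℝ) = 1/(a:ℝ) + ∑ k ∈ Icc (a+1) n, 1/(k:ℝ) := by
  rw [← Finset.Ico_add_one_right_eq_Icc, ← Finset.Ico_add_one_right_eq_Icc,
    Finset.sum_eq_sum_Ico_succ_bot (by omega : a < n+1)]

lemma tele (n m r : ℕ) (hrm : r ≤ m) (hmn : m ≤ n) :
    ∑ j ∈ Ico r m, (∑ k ∈ Icc (j+1) n, (1/(k:ℝ)))
      = m * (∑ k ∈ Icc (m+1) n, (1/(k:ℝ))) - r * (∑ k ∈ Icc (r+1) n, (1/(k:ℝ)))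
        + ((m:ℝ) - r) := by
  induction m, hrm using Nat.le_induction with
  | base => simp
  | succ m hrm ih =>
    have hmn' : m ≤ n := by omega
    rw [Finset.sum_Ico_succ_top hrm, ih hmn']
    rw [Sbot n (m+1) hmn]
    have h0 : ((m:ℝ)+1) ≠ 0 := by positivity
    push_cast
    field_simp
    ring

lemma key (n m r0 : ℕ) (hm1 : 1 ≤ m) (hmn : m + 1 ≤ n) (hr : r0 < n) :
    ∑ j ∈ range n,
      ((if r0 = j then (1/(n:ℝ)) * (∑ k ∈ Icc (j+1) n, 1/(k:ℝ)) + (r0:ℝ)/n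
        else if j < r0 then (1/(n:ℝ)) * (∑ k ∈ Icc (r0+1) n, 1/(k:ℝ))
        else (1/(n:ℝ)) * (∑ k ∈ Icc (j+1) n, 1/(k:ℝ))) *
       (if j + 1 ≤ m then -1/(m:ℝ) else if j + 1 = m + 1 then (1:ℝ) else 0))
    = ((m:ℝ)/n) * (if r0 + 1 ≤ m then -1/(m:ℝ) else if r0 + 1 = m + 1 then (1:ℝ) else 0) := by
  have hn0 : (n:ℝ) ≠ 0 := Nat.cast_ne_zero.mpr (by omega)
  have hm0 : (m:ℝ) ≠ 0 := Nat.cast_ne_zero.mpr (by omega)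
  rw [range_eq_Ico, ← Finset.sum_Ico_consecutive _ (Nat.zero_le (m+1)) hmn]
  have h2 : ∑ j ∈ Ico (m+1) n,
      ((if r0 = j then (1/(n:ℝ)) * (∑ k ∈ Icc (j+1) n, 1/(k:ℝ)) + (r0:ℝ)/n
        else if j < r0 then (1/(n:ℝ)) * (∑ k ∈ Icc (r0+1) n, 1/(k:ℝ))
        else (1/(n:ℝ)) * (∑ k ∈ Icc (j+1) n, 1/(k:ℝ))) *
       (if j + 1 ≤ m then -1/(m:ℝ) else if j + 1 = m + 1 then (1:ℝ) else 0)) = 0 := by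
    apply Finset.sum_eq_zero
    intro j hj
    rw [mem_Ico] at hj
    rw [if_neg (show ¬ (j+1 ≤ m) by omega), if_neg (show ¬ (j+1 = m+1) by omega), mul_zero]
  rw [h2, add_zero, show Ico 0 (m+1) = range (m+1) by rw [range_eq_Ico],
    Finset.sum_range_succ, if_neg (show ¬ (m+1 ≤ m) by omega), if_pos rfl, mul_one]
  have h3 : ∑ j ∈ range m,
      ((if r0 = j then (1/(n:ℝ)) * (∑ k ∈ Icc (j+1) n, 1/(k:ℝ)) + (r0:ℝ)/n
        else if j < r0 then (1/(n:ℝ)) * (∑ k ∈ Icc (r0+1) n, 1/(k:ℝ))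
        else (1/(n:ℝ)) * (∑ k ∈ Icc (j+1) n, 1/(k:ℝ))) *
       (if j + 1 ≤ m then -1/(m:ℝ) else if j + 1 = m + 1 then (1:ℝ) else 0))
    = (∑ j ∈ range m,
      (if r0 = j then (1/(n:ℝ)) * (∑ k ∈ Icc (j+1) n, 1/(k:ℝ)) + (r0:ℝ)/n
        else if j < r0 then (1/(n:ℝ)) * (∑ k ∈ Icc (r0+1) n, 1/(k:ℝ))
        else (1/(n:ℝ)) * (∑ k ∈ Icc (j+1) n, 1/(k:ℝ)))) * (-1/(m:ℝ)) := by
    rw [Finset.sum_mul]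
    apply Finset.sum_congr rfl
    intro j hj
    rw [mem_range] at hj
    rw [if_pos (show j+1 ≤ m by omega)]
  rw [h3]
  rcases Nat.lt_trichotomy r0 m with h | h | h
  · -- r0 < m
    rw [if_pos (show r0+1 ≤ m by omega),
      if_neg (show ¬ (r0 = m) by omega), if_neg (show ¬ (m < r0) by omega)]
    rw [range_eq_Ico, ← Finset.sum_Ico_consecutive _ (Nat.zero_le (r0+1)) (show r0+1 ≤ m by omega),
      show Ico 0 (r0+1) = range (r0+1) by rw [range_eq_Ico], Finset.sum_range_succ,
      if_pos rfl]
    have h4 : ∑ j ∈ range r0,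
        (if r0 = j then (1/(n:ℝ)) * (∑ k ∈ Icc (j+1) n, 1/(k:ℝ)) + (r0:ℝ)/n
          else if j < r0 then (1/(n:ℝ)) * (∑ k ∈ Icc (r0+1) n, 1/(k:ℝ))
          else (1/(n:ℝ)) * (∑ k ∈ Icc (j+1) n, 1/(k:ℝ)))
        = (r0:ℝ) * ((1/(n:ℝ)) * (∑ k ∈ Icc (r0+1) n, 1/(k:ℝ))) := by
      calc ∑ j ∈ range r0,
          (if r0 = j then (1/(n:ℝ)) * (∑ k ∈ Icc (j+1) n, 1/(k:ℝ)) + (r0:ℝ)/n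
            else if j < r0 then (1/(n:ℝ)) * (∑ k ∈ Icc (r0+1) n, 1/(k:ℝ))
            else (1/(n:ℝ)) * (∑ k ∈ Icc (j+1) n, 1/(k:ℝ)))
          = ∑ _j ∈ range r0, (1/(n:ℝ)) * (∑ k ∈ Icc (r0+1) n, 1/(k:ℝ)) := by
            apply Finset.sum_congr rfl
            intro j hj
            rw [mem_range] at hj
            rw [if_neg (show ¬ (r0 = j) by omega), if_pos hj]
        _ = (r0:ℝ) * ((1/(n:ℝ)) * (∑ k ∈ Icc (r0+1) n, 1/(k:ℝ))) := by
            rw [Finset.sum_const, card_range, nsmul_eq_mul]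
    have h5 : ∑ j ∈ Ico (r0+1) m,
        (if r0 = j then (1/(n:ℝ)) * (∑ k ∈ Icc (j+1) n, 1/(k:ℝ)) + (r0:ℝ)/n
          else if j < r0 then (1/(n:ℝ)) * (∑ k ∈ Icc (r0+1) n, 1/(k:ℝ))
          else (1/(n:ℝ)) * (∑ k ∈ Icc (j+1) n, 1/(k:ℝ)))
        = ∑ j ∈ Ico (r0+1) m, (1/(n:ℝ)) * (∑ k ∈ Icc (j+1) n, 1/(k:ℝ)) := by
      apply Finset.sum_congr rfl
      intro j hj
      rw [mem_Ico] at hj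
      rw [if_neg (show ¬ (r0 = j) by omega), if_neg (show ¬ (j < r0) by omega)]
    rw [h4, h5, ← Finset.mul_sum, tele n m (r0+1) (by omega) (by omega),
      Sbot n (r0+1) (by omega)]
    have hr1 : ((r0:ℝ)+1) ≠ 0 := by positivity
    push_cast
    field_simp
    ring
  · -- r0 = m
    subst h
    rw [if_neg (show ¬ (r0+1 ≤ r0) by omega), if_pos rfl, if_pos rfl]
    have h6 : ∑ j ∈ range r0,
        (if r0 = j then (1/(n:ℝ)) * (∑ k ∈ Icc (j+1) n, 1/(k:ℝ)) + (r0:ℝ)/n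
          else if j < r0 then (1/(n:ℝ)) * (∑ k ∈ Icc (r0+1) n, 1/(k:ℝ))
          else (1/(n:ℝ)) * (∑ k ∈ Icc (j+1) n, 1/(k:ℝ)))
        = (r0:ℝ) * ((1/(n:ℝ)) * (∑ k ∈ Icc (r0+1) n, 1/(k:ℝ))) := by
      calc _ = ∑ _j ∈ range r0, (1/(n:ℝ)) * (∑ k ∈ Icc (r0+1) n, 1/(k:ℝ)) := by
            apply Finset.sum_congr rfl
            intro j hj
            rw [mem_range] at hj
            rw [if_neg (show ¬ (r0 = j) by omega), if_pos hj]
        _ = _ := by rw [Finset.sum_const, card_range, nsmul_eq_mul]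
    rw [h6]
    field_simp
    ring
  · -- m < r0
    rw [if_neg (show ¬ (r0+1 ≤ m) by omega), if_neg (show ¬ (r0+1 = m+1) by omega),
      if_neg (show ¬ (r0 = m) by omega), if_pos h]
    have h7 : ∑ j ∈ range m,
        (if r0 = j then (1/(n:ℝ)) * (∑ k ∈ Icc (j+1) n, 1/(k:ℝ)) + (r0:ℝ)/n
          else if j < r0 then (1/(n:ℝ)) * (∑ k ∈ Icc (r0+1) n, 1/(k:ℝ))
          else (1/(n:ℝ)) * (∑ k ∈ Icc (j+1) n, 1/(k:ℝ)))
        = (m:ℝ) * ((1/(n:ℝ)) * (∑ k ∈ Icc (r0+1) n, 1/(k:ℝ))) := by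
      calc _ = ∑ _j ∈ range m, (1/(n:ℝ)) * (∑ k ∈ Icc (r0+1) n, 1/(k:ℝ)) := by
            apply Finset.sum_congr rfl
            intro j hj
            rw [mem_range] at hj
            rw [if_neg (show ¬ (r0 = j) by omega), if_pos (show j < r0 by omega)]
        _ = _ := by rw [Finset.sum_const, card_range, nsmul_eq_mul]
    rw [h7]
    field_simp
    ring

/-- The vector Ψ_i is an eigenvector of the single-card kernel K of the
hit-and-run top-to-random shuffle, with eigenvalue 1 - i/n. Positions are
1-based via `l.val + 1`. -/
theorem stmt_0 (n : ℕ) (hn : 2 ≤ n) (K : Matrix (Fin n) (Fin n) ℝ)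
    (hK : ∀ i j : Fin n,
      K i j =
        if i = j then
          (1 / (n : ℝ)) * ∑ k ∈ Finset.Icc (j.val + 1) n, 1 / (k : ℝ) + (i.val : ℝ) / n
        else if j < i then (1 / (n : ℝ)) * ∑ k ∈ Finset.Icc (i.val + 1) n, 1 / (k : ℝ)
        else (1 / (n : ℝ)) * ∑ k ∈ Finset.Icc (j.val + 1) n, 1 / (k : ℝ))
    (i : ℕ) (hi : 1 ≤ i) (hi' : i ≤ n - 1)
    (Ψ : Fin n → ℝ)
    (hΨ : ∀ l : Fin n,
      Ψ l = if l.val + 1 ≤ n - i then -1 / ((n : ℝ) - i)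
        else if l.val + 1 = n - i + 1 then 1 else 0) :
    K.mulVec Ψ = (1 - (i : ℝ) / n) • Ψ := by
  have hn0 : (n:ℝ) ≠ 0 := Nat.cast_ne_zero.mpr (by omega)
  set m := n - i with hm
  have hm1 : 1 ≤ m := by omega
  have hmn : m + 1 ≤ n := by omega
  have hcast : (m:ℝ) = (n:ℝ) - i := by
    rw [hm]; push_cast [Nat.cast_sub (by omega : i ≤ n)]; ring
  have hΨ' : ∀ l : Fin n,
      Ψ l = if l.val + 1 ≤ m then -1/(m:ℝ) else if l.val + 1 = m + 1 then (1:ℝ) else 0 := by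
    intro l
    rw [hΨ l, ← hcast]
  have hev : 1 - (i:ℝ)/n = (m:ℝ)/n := by
    rw [hcast]; field_simp
  funext r
  have hsum : (K.mulVec Ψ) r = ∑ j : Fin n, K r j * Ψ j := by
    simp [Matrix.mulVec, dotProduct]
  rw [Pi.smul_apply, smul_eq_mul, hev, hsum]
  have hterm : ∀ j : Fin n, K r j * Ψ j =
      (fun jv : ℕ =>
        (if r.val = jv then (1/(n:ℝ)) * (∑ k ∈ Icc (jv+1) n, 1/(k:ℝ)) + (r.val:ℝ)/n
          else if jv < r.val then (1/(n:ℝ)) * (∑ k ∈ Icc (r.val+1) n, 1/(k:ℝ))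
          else (1/(n:ℝ)) * (∑ k ∈ Icc (jv+1) n, 1/(k:ℝ))) *
        (if jv + 1 ≤ m then -1/(m:ℝ) else if jv + 1 = m + 1 then (1:ℝ) else 0)) j.val := by
    intro j
    rw [hK r j, hΨ' j]
    simp only [Fin.ext_iff, Fin.lt_def]
  calc ∑ j : Fin n, K r j * Ψ j
      = ∑ j ∈ range n,
        ((if r.val = j then (1/(n:ℝ)) * (∑ k ∈ Icc (j+1) n, 1/(k:ℝ)) + (r.val:ℝ)/n
          else if j < r.val then (1/(n:ℝ)) * (∑ k ∈ Icc (r.val+1) n, 1/(k:ℝ))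
          else (1/(n:ℝ)) * (∑ k ∈ Icc (j+1) n, 1/(k:ℝ))) *
        (if j + 1 ≤ m then -1/(m:ℝ) else if j + 1 = m + 1 then (1:ℝ) else 0)) := by
        rw [Finset.sum_congr rfl (fun j _ => hterm j)]
        exact Fin.sum_univ_eq_sum_range (fun jv =>
          (if r.val = jv then (1/(n:ℝ)) * (∑ k ∈ Icc (jv+1) n, 1/(k:ℝ)) + (r.val:ℝ)/n
            else if jv < r.val then (1/(n:ℝ)) * (∑ k ∈ Icc (r.val+1) n, 1/(k:ℝ))
            else (1/(n:ℝ)) * (∑ k ∈ Icc (jv+1) n, 1/(k:ℝ))) *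
          (if jv + 1 ≤ m then -1/(m:ℝ) else if jv + 1 = m + 1 then (1:ℝ) else 0)) n
    _ = ((m:ℝ)/n) * (if r.val + 1 ≤ m then -1/(m:ℝ) else if r.val + 1 = m + 1 then (1:ℝ) else 0) :=
        key n m r.val hm1 hmn r.isLt
    _ = ((m:ℝ)/n) * Ψ r := by rw [hΨ' r]
end

section
/- The n×n matrix K of the single-card chain (as defined) has eigenvalues exactly 1, 1 - 1/n, 1 - 2/n, ..., 1 - (n-1)/n, each with multiplicity one; in particular all eigenvalues of K are nonnegative. -/
open Finset Polynomial

namespace StmtAux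

/-- `g n m = (1/n) * ∑_{k=m+1}^n 1/k`. -/
noncomputable def g (n m : ℕ) : ℝ := (1 / (n : ℝ)) * ∑ k ∈ Finset.Icc (m + 1) n, 1 / (k : ℝ)

lemma g_succ {n m : ℕ} (h : m + 1 ≤ n) :
    g n m = g n (m + 1) + 1 / ((n : ℝ) * ((m : ℝ) + 1)) := by
  have hins : Finset.Icc (m + 1) n = insert (m + 1) (Finset.Icc (m + 2) n) := by
    ext x; simp [Finset.mem_Icc, Finset.mem_insert]; omega
  have hnot : (m + 1) ∉ Finset.Icc (m + 2) n := by simp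
  rw [g, g, hins, Finset.sum_insert hnot]
  simp only [one_div, mul_inv]
  push_cast
  ring

/-- entry function of `K`. -/
noncomputable def Fv (n iv mv : ℕ) : ℝ :=
  g n (max iv mv) + if iv = mv then (iv : ℝ) / n else 0

lemma sumF_lt {n iv jv : ℕ} (h : jv < iv) :
    ∑ m ∈ Finset.range (jv + 1), Fv n iv m = ((jv : ℝ) + 1) * g n iv := by
  have e1 : ∀ m ∈ Finset.range (jv + 1), Fv n iv m = g n iv := by
    intro m hm
    rw [Finset.mem_range] at hm
    have h1 : max iv m = iv := by omega
    have h2 : iv ≠ m := by omega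
    simp [Fv, h1, h2]
  rw [Finset.sum_congr rfl e1, Finset.sum_const, Finset.card_range, nsmul_eq_mul]
  push_cast; ring

lemma sumF_le {n iv jv : ℕ} (h : iv ≤ jv) :
    ∑ m ∈ Finset.range (jv + 1), Fv n iv m =
      ((iv : ℝ) + 1) * g n iv + (∑ m ∈ Finset.Ico (iv + 1) (jv + 1), g n m)
        + (iv : ℝ) / n := by
  rw [Finset.range_eq_Ico, ← Finset.sum_Ico_consecutive _ (Nat.zero_le (iv + 1))
    (by omega : iv + 1 ≤ jv + 1)]
  have h1 : ∑ m ∈ Finset.Ico 0 (iv + 1), Fv n iv m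
      = ((iv : ℝ) + 1) * g n iv + (iv : ℝ) / n := by
    rw [← Finset.range_eq_Ico]
    have e1 : ∀ m ∈ Finset.range (iv + 1), Fv n iv m
        = g n iv + (if iv = m then (iv : ℝ) / n else 0) := by
      intro m hm
      rw [Finset.mem_range] at hm
      have h1' : max iv m = iv := by omega
      rw [Fv, h1']
    rw [Finset.sum_congr rfl e1, Finset.sum_add_distrib, Finset.sum_const,
      Finset.card_range, nsmul_eq_mul, Finset.sum_ite_eq,
      if_pos (Finset.self_mem_range_succ iv)]
    push_cast; ring
  have h2 : ∑ m ∈ Finset.Ico (iv + 1) (jv + 1), Fv n iv m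
      = ∑ m ∈ Finset.Ico (iv + 1) (jv + 1), g n m := by
    refine Finset.sum_congr rfl fun m hm => ?_
    rw [Finset.mem_Ico] at hm
    have h1' : max iv m = m := by omega
    have h2' : iv ≠ m := by omega
    simp [Fv, h1', h2']
  rw [h1, h2]; ring

/-- upper triangular matrix of ones. -/
noncomputable def Um (n : ℕ) : Matrix (Fin n) (Fin n) ℝ :=
  Matrix.of fun i j => if i ≤ j then 1 else 0

/-- nilpotent superdiagonal matrix. -/
noncomputable def Nm (n : ℕ) : Matrix (Fin n) (Fin n) ℝ :=
  Matrix.of fun i j => if (j : ℕ) = (i : ℕ) + 1 then 1 else 0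

lemma Nm_mul_apply {n : ℕ} (A : Matrix (Fin n) (Fin n) ℝ) (i j : Fin n) :
    (Nm n * A) i j = if h : (i : ℕ) + 1 < n then A ⟨(i : ℕ) + 1, h⟩ j else 0 := by
  rw [Matrix.mul_apply]
  split_ifs with h
  · rw [Finset.sum_eq_single (⟨(i : ℕ) + 1, h⟩ : Fin n)]
    · simp [Nm]
    · intro l _ hl
      have : (l : ℕ) ≠ (i : ℕ) + 1 := fun hv => hl (Fin.ext hv)
      simp [Nm, this]
    · simp
  · refine Finset.sum_eq_zero fun l _ => ?_
    have : (l : ℕ) ≠ (i : ℕ) + 1 := by have := l.isLt; omega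
    simp [Nm, this]

lemma LU_eq_one {n : ℕ} : (1 - Nm n) * Um n = 1 := by
  ext i j
  rw [sub_mul, one_mul, Matrix.sub_apply, Nm_mul_apply]
  split_ifs with h
  · have hj := j.isLt
    simp only [Um, Matrix.of_apply, Matrix.one_apply, Fin.le_def, Fin.ext_iff]
    split_ifs <;> norm_num <;> omega
  · have hi := i.isLt
    have hin : (i : ℕ) = n - 1 := by omega
    simp only [Um, Matrix.of_apply, Matrix.one_apply, Fin.le_def, Fin.ext_iff, sub_zero]
    have hj := j.isLt
    split_ifs <;> norm_num <;> omega

lemma charpoly_conj {n : ℕ} (A L U : Matrix (Fin n) (Fin n) ℝ) (hLU : L * U = 1) :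
    (L * A * U).charpoly = A.charpoly := by
  have hmap : L.map C * U.map C = 1 := by
    rw [← Matrix.map_mul, hLU, Matrix.map_one _ (map_zero C) (map_one C)]
  have hch : Matrix.charmatrix (L * A * U) = L.map C * Matrix.charmatrix A * U.map C := by
    have hsc : L.map C * Matrix.scalar (Fin n) (X : ℝ[X]) * U.map C
        = Matrix.scalar (Fin n) (X : ℝ[X]) := by
      rw [← (Matrix.scalar_commute (X : ℝ[X]) (fun r' => Commute.all _ _) (L.map C)).eq,
        mul_assoc, hmap, mul_one]
    rw [Matrix.charmatrix, Matrix.charmatrix, RingHom.mapMatrix_apply, RingHom.mapMatrix_apply,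
      mul_sub, sub_mul, hsc, Matrix.map_mul, Matrix.map_mul]
  rw [Matrix.charpoly, Matrix.charpoly, hch, Matrix.det_mul, Matrix.det_mul,
    mul_right_comm, ← Matrix.det_mul, hmap, Matrix.det_one, one_mul]

end StmtAux

open StmtAux

/-- The single-card kernel K has characteristic polynomial
∏_{i=0}^{n-1} (X - (1 - i/n)), i.e. eigenvalues 1, 1-1/n, ..., 1-(n-1)/n,
each with multiplicity one; in particular every eigenvalue is nonnegative. -/
theorem stmt_1 (n : ℕ) (hn : 2 ≤ n) (K : Matrix (Fin n) (Fin n) ℝ)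
    (hK : ∀ i j : Fin n,
      K i j =
        if i = j then
          (1 / (n : ℝ)) * ∑ k ∈ Finset.Icc (j.val + 1) n, 1 / (k : ℝ) + (i.val : ℝ) / n
        else if j < i then (1 / (n : ℝ)) * ∑ k ∈ Finset.Icc (i.val + 1) n, 1 / (k : ℝ)
        else (1 / (n : ℝ)) * ∑ k ∈ Finset.Icc (j.val + 1) n, 1 / (k : ℝ)) :
    K.charpoly = ∏ i ∈ Finset.range n, (X - C (1 - (i : ℝ) / n)) ∧
      ∀ μ : ℝ, K.charpoly.IsRoot μ → 0 ≤ μ := by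
  have hn0 : (n : ℝ) ≠ 0 := Nat.cast_ne_zero.mpr (by omega)
  -- rewrite K via Fv
  have hK' : ∀ i j : Fin n, K i j = Fv n (i : ℕ) (j : ℕ) := by
    intro i j
    rw [hK, Fv]
    rcases lt_trichotomy i j with h | h | h
    · have h1 : ¬ i = j := ne_of_lt h
      have h2 : ¬ j < i := not_lt_of_gt h
      have h3 : max (i : ℕ) (j : ℕ) = (j : ℕ) := max_eq_right (le_of_lt h)
      have h4 : (i : ℕ) ≠ (j : ℕ) := fun hv => h1 (Fin.ext hv)
      simp [h1, h2, h3, h4, g]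
    · subst h
      simp [g]
    · have h1 : ¬ i = j := (ne_of_lt h).symm
      have h3 : max (i : ℕ) (j : ℕ) = (i : ℕ) := max_eq_left (le_of_lt h)
      have h4 : (i : ℕ) ≠ (j : ℕ) := fun hv => h1 (Fin.ext hv)
      simp [h1, h, h3, h4, g]
  -- the partial row sums
  have hA : ∀ i j : Fin n, (K * Um n) i j
      = ∑ m ∈ Finset.range ((j : ℕ) + 1), Fv n (i : ℕ) m := by
    intro i j
    rw [Matrix.mul_apply]
    have e1 : ∀ m : Fin n, K i m * Um n m j
        = if (m : ℕ) ≤ (j : ℕ) then Fv n (i : ℕ) (m : ℕ) else 0 := by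
      intro m
      rw [hK' i m]
      simp only [Um, Matrix.of_apply, Fin.le_def]
      split_ifs <;> simp
    rw [Finset.sum_congr rfl (fun m _ => e1 m),
      Fin.sum_univ_eq_sum_range (fun m => if m ≤ (j : ℕ) then Fv n (i : ℕ) m else 0),
      ← Finset.sum_filter]
    congr 1
    ext x
    simp only [Finset.mem_filter, Finset.mem_range]
    have := j.isLt
    omega
  -- the conjugated matrix
  set M : Matrix (Fin n) (Fin n) ℝ := (1 - Nm n) * K * Um n with hM
  have hMapp : ∀ i j : Fin n, M i j = (K * Um n) i j
      - (if h : (i : ℕ) + 1 < n then (K * Um n) ⟨(i : ℕ) + 1, h⟩ j else 0) := by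
    intro i j
    rw [hM, mul_assoc, sub_mul, one_mul, Matrix.sub_apply, Nm_mul_apply]
  -- upper entries vanish
  have hMu : ∀ i j : Fin n, i < j → M i j = 0 := by
    intro i j hij
    have hij' : (i : ℕ) < (j : ℕ) := hij
    have h1 : (i : ℕ) + 1 < n := lt_of_le_of_lt hij' j.isLt
    rw [hMapp, dif_pos h1, hA, hA]
    simp only
    rw [sumF_le (le_of_lt hij'), sumF_le (by omega : (i : ℕ) + 1 ≤ (j : ℕ)),
      Finset.sum_eq_sum_Ico_succ_bot (by omega : (i : ℕ) + 1 < (j : ℕ) + 1),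
      g_succ (by omega : (i : ℕ) + 1 ≤ n)]
    have hi0 : ((i : ℕ) : ℝ) + 1 ≠ 0 := by positivity
    field_simp
    push_cast
    ring
  -- diagonal entries
  have hMd : ∀ i : Fin n, M i i = (((i : ℕ) : ℝ) + 1) / n := by
    intro i
    by_cases h1 : (i : ℕ) + 1 < n
    · rw [hMapp, dif_pos h1, hA, hA]
      simp only
      rw [sumF_le (le_refl (i : ℕ)), sumF_lt (by omega : (i : ℕ) < (i : ℕ) + 1),
        Finset.Ico_self, Finset.sum_empty, g_succ (by omega : (i : ℕ) + 1 ≤ n)]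
      have hi0 : ((i : ℕ) : ℝ) + 1 ≠ 0 := by positivity
      field_simp
      ring
    · have h2 : (i : ℕ) + 1 = n := by have := i.isLt; omega
      rw [hMapp, dif_neg h1, sub_zero, hA,
        sumF_le (le_refl (i : ℕ)), Finset.Ico_self, Finset.sum_empty]
      have hg : g n (i : ℕ) = 1 / ((n : ℝ) * n) := by
        rw [g]
        have : Finset.Icc ((i : ℕ) + 1) n = {n} := by rw [h2, Finset.Icc_self]
        rw [this, Finset.sum_singleton]
        field_simp
      rw [hg]
      have h3 : ((i : ℕ) : ℝ) + 1 = (n : ℝ) := by exact_mod_cast h2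
      have h4 : ((i : ℕ) : ℝ) = (n : ℝ) - 1 := by linarith
      rw [h4]
      field_simp
      ring
  -- charpoly of M
  have hMcp : M.charpoly = ∏ i : Fin n, (X - C ((((i : ℕ) : ℝ) + 1) / n)) := by
    have htri : M.BlockTriangular OrderDual.toDual := by
      intro i j hlt
      exact hMu i j hlt
    have := Matrix.det_of_lowerTriangular (Matrix.charmatrix M) htri.charmatrix
    rw [Matrix.charpoly, this]
    refine Finset.prod_congr rfl fun i _ => ?_
    rw [Matrix.charmatrix_apply_eq, hMd]
  have hconj : K.charpoly = M.charpoly := (charpoly_conj K (1 - Nm n) (Um n) LU_eq_one).symm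
  have hprod : (∏ i : Fin n, (X - C ((((i : ℕ) : ℝ) + 1) / n)))
      = ∏ i ∈ Finset.range n, (X - C (1 - (i : ℝ) / n)) := by
    rw [Fin.prod_univ_eq_prod_range (fun i => X - C (((i : ℝ) + 1) / n)) n,
      ← Finset.prod_range_reflect]
    refine Finset.prod_congr rfl fun i hi => ?_
    rw [Finset.mem_range] at hi
    congr 1
    have e : ((n - 1 - i : ℕ) : ℝ) + 1 = (n : ℝ) - i := by
      rw [show ((n - 1 - i : ℕ) : ℝ) + 1 = ((n - 1 - i + 1 : ℕ) : ℝ) by push_cast; ring,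
        show n - 1 - i + 1 = n - i from by omega, Nat.cast_sub (le_of_lt hi)]
    rw [e]
    field_simp
  have hfinal : K.charpoly = ∏ i ∈ Finset.range n, (X - C (1 - (i : ℝ) / n)) := by
    rw [hconj, hMcp, hprod]
  refine ⟨hfinal, fun μ hroot => ?_⟩
  rw [hfinal, Polynomial.IsRoot, Polynomial.eval_prod] at hroot
  simp only [Polynomial.eval_sub, Polynomial.eval_X, Polynomial.eval_C] at hroot
  obtain ⟨i, hi, h0⟩ := Finset.prod_eq_zero_iff.mp hroot
  rw [Finset.mem_range] at hi
  have hμ : μ = 1 - (i : ℝ) / n := by linarith [sub_eq_zero.mp (by linarith [h0] : μ - (1 - (i : ℝ) / n) = 0)]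
  have hle : (i : ℝ) / n ≤ 1 := by
    rw [div_le_one (by positivity : (0:ℝ) < n)]
    exact_mod_cast le_of_lt hi
  linarith
end

section
/- Let G be a finite group and S = (s_1,...,s_k) a tuple of elements of G with orders m_1,...,m_k. Let q_S = (1/k)∑_{i=1}^k (1/m_i)∑_{j=0}^{m_i - 1} δ_{s_i^j} be the hit-and-run measure, and let Q(x,y) = q_S(x⁻¹y). Then the operator Q on L²(G) (with uniform measure) is positive semidefinite: for every f : G → ℝ, ∑_{x,y∈G} f(x) Q(x,y) f(y) ≥ 0. -/
open Finset

private lemma key_han (G : Type*) [Group G] [Fintype G] (t : G) (f : G → ℝ) :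
    0 ≤ ∑ j ∈ Finset.range (orderOf t), ∑ x : G, f x * f (x * t ^ j) := by
  set m := orderOf t with hm
  have hm0 : 0 < m := orderOf_pos t
  set F : G → ℝ := fun x => ∑ j ∈ Finset.range m, f (x * t ^ j) with hF
  have hFs : ∀ x : G, F (x * t) = F x := by
    intro x
    have h1 := Finset.sum_range_succ' (fun j => f (x * t ^ j)) m
    have h2 := Finset.sum_range_succ (fun j => f (x * t ^ j)) m
    have hgm : f (x * t ^ m) = f (x * t ^ 0) := by
      rw [hm, pow_orderOf_eq_one, pow_zero]
    have : ∑ j ∈ Finset.range m, f (x * t ^ (j + 1))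
        = ∑ j ∈ Finset.range m, f (x * t ^ j) := by
      rw [hgm] at h2; linarith
    calc F (x * t) = ∑ j ∈ Finset.range m, f (x * t ^ (j + 1)) := by
          simp only [hF]
          refine Finset.sum_congr rfl fun j _ => ?_
          rw [mul_assoc, ← pow_succ']
      _ = F x := this
  have hFpow : ∀ (x : G) (j : ℕ), F (x * t ^ j) = F x := by
    intro x j
    induction j with
    | zero => simp
    | succ n ih => rw [pow_succ, ← mul_assoc, hFs, ih]
  have hsum : ∑ x : G, F x * F x = (m : ℝ) * ∑ x : G, f x * F x := by
    calc ∑ x : G, F x * F x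
        = ∑ x : G, ∑ j ∈ Finset.range m, F x * f (x * t ^ j) := by
          simp only [hF, Finset.mul_sum]
      _ = ∑ j ∈ Finset.range m, ∑ x : G, F x * f (x * t ^ j) := Finset.sum_comm
      _ = ∑ j ∈ Finset.range m, ∑ x : G, f x * F x := by
          refine Finset.sum_congr rfl fun j _ => ?_
          rw [← Function.Bijective.sum_comp (Equiv.mulRight (t ^ j)⁻¹).bijective
            (fun x => F x * f (x * t ^ j))]
          refine Finset.sum_congr rfl fun y _ => ?_
          simp only [Equiv.coe_mulRight]
          rw [inv_mul_cancel_right, mul_comm]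
          congr 1
          rw [← hFpow (y * (t ^ j)⁻¹) j, inv_mul_cancel_right]
      _ = (m : ℝ) * ∑ x : G, f x * F x := by
          rw [Finset.sum_const, Finset.card_range, nsmul_eq_mul]
  have htarget : ∑ j ∈ Finset.range m, ∑ x : G, f x * f (x * t ^ j)
      = ∑ x : G, f x * F x := by
    rw [Finset.sum_comm]
    simp only [hF, Finset.mul_sum]
  have hsq : 0 ≤ ∑ x : G, F x * F x := Finset.sum_nonneg fun x _ => mul_self_nonneg _
  rw [htarget]
  have hmR : (0 : ℝ) < (m : ℝ) := by exact_mod_cast hm0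
  nlinarith [hsq, hsum]

/-- The hit-and-run kernel Q(x,y) = q_S(x⁻¹y) associated to any tuple
(s_1,...,s_k) of elements of a finite group is positive semidefinite. -/
theorem stmt_3 (G : Type*) [Group G] [Fintype G] [DecidableEq G]
    (k : ℕ) (hk : 1 ≤ k) (s : Fin k → G)
    (q : G → ℝ)
    (hq : ∀ g : G, q g = (1 / (k : ℝ)) * ∑ i : Fin k,
      (1 / (orderOf (s i) : ℝ)) * ∑ j ∈ Finset.range (orderOf (s i)),
        (if g = (s i) ^ j then (1 : ℝ) else 0))
    (f : G → ℝ) :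
    0 ≤ ∑ x : G, ∑ y : G, f x * q (x⁻¹ * y) * f y := by
  have heq : ∑ x : G, ∑ y : G, f x * q (x⁻¹ * y) * f y
      = (1 / (k : ℝ)) * ∑ i : Fin k, (1 / (orderOf (s i) : ℝ)) *
          ∑ j ∈ Finset.range (orderOf (s i)), ∑ x : G, f x * f (x * (s i) ^ j) := by
    calc ∑ x : G, ∑ y : G, f x * q (x⁻¹ * y) * f y
        = ∑ x : G, ∑ y : G, ∑ i : Fin k, ∑ j ∈ Finset.range (orderOf (s i)),
            (1 / (k : ℝ)) * ((1 / (orderOf (s i) : ℝ)) *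
              (if y = x * (s i) ^ j then f x * f y else 0)) := by
          refine Finset.sum_congr rfl fun x _ => Finset.sum_congr rfl fun y _ => ?_
          rw [hq]
          simp only [Finset.mul_sum, Finset.sum_mul]
          refine Finset.sum_congr rfl fun i _ => Finset.sum_congr rfl fun j _ => ?_
          have hc : (x⁻¹ * y = s i ^ j) ↔ (y = x * (s i) ^ j) := inv_mul_eq_iff_eq_mul
          simp only [mul_ite, ite_mul, mul_one, one_mul, mul_zero, zero_mul, hc]
          split_ifs <;> ring
      _ = ∑ i : Fin k, ∑ j ∈ Finset.range (orderOf (s i)), ∑ x : G, ∑ y : G,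
            (1 / (k : ℝ)) * ((1 / (orderOf (s i) : ℝ)) *
              (if y = x * (s i) ^ j then f x * f y else 0)) := by
          refine (Finset.sum_congr rfl fun x _ => Finset.sum_comm).trans ?_
          rw [Finset.sum_comm]
          refine Finset.sum_congr rfl fun i _ => ?_
          exact (Finset.sum_congr rfl fun x _ => Finset.sum_comm).trans Finset.sum_comm
      _ = (1 / (k : ℝ)) * ∑ i : Fin k, (1 / (orderOf (s i) : ℝ)) *
            ∑ j ∈ Finset.range (orderOf (s i)), ∑ x : G, f x * f (x * (s i) ^ j) := by
          simp only [Finset.mul_sum]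
          refine Finset.sum_congr rfl fun i _ => Finset.sum_congr rfl fun j _ =>
            Finset.sum_congr rfl fun x _ => ?_
          rw [← Finset.mul_sum, ← Finset.mul_sum,
            Finset.sum_ite_eq' Finset.univ (x * (s i) ^ j) (fun y => f x * f y),
            if_pos (Finset.mem_univ _)]
  rw [heq]
  have h1 : (0 : ℝ) ≤ 1 / (k : ℝ) := by positivity
  refine mul_nonneg h1 (Finset.sum_nonneg fun i _ => mul_nonneg (by positivity) ?_)
  exact key_han G (s i) f
end

section
/- For the single-card chain K (hit-and-run top-to-random), the L² distance from stationarity starting at the bottom position n is exactly d₂(K^t(n,·), u)² = (1 − 1/n)^{2t} (n−1) for all t ≥ 0. -/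
open Finset

/-- For the single-card chain K of the hit-and-run top-to-random shuffle,
starting from the bottom position n,
d₂(K^t(n,·), u)² = (1 - 1/n)^{2t} (n - 1) for all t ≥ 0. -/
theorem stmt_15 (n : ℕ) (hn : 2 ≤ n) (K : Matrix (Fin n) (Fin n) ℝ)
    (hK : ∀ i j : Fin n,
      K i j =
        if i = j then
          (1 / (n : ℝ)) * ∑ k ∈ Finset.Icc (j.val + 1) n, 1 / (k : ℝ) + (i.val : ℝ) / n
        else if j < i then (1 / (n : ℝ)) * ∑ k ∈ Finset.Icc (i.val + 1) n, 1 / (k : ℝ)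
        else (1 / (n : ℝ)) * ∑ k ∈ Finset.Icc (j.val + 1) n, 1 / (k : ℝ))
    (t : ℕ) :
    (n : ℝ) * ∑ j : Fin n,
        ((K ^ t) (⟨n - 1, by omega⟩ : Fin n) j - 1 / (n : ℝ)) ^ 2 =
      (1 - 1 / (n : ℝ)) ^ (2 * t) * ((n : ℝ) - 1) := by
  set i0 : Fin n := (⟨n - 1, by omega⟩ : Fin n) with hi0
  have hnR : (2:ℝ) ≤ (n:ℝ) := by exact_mod_cast hn
  have hn0 : (n:ℝ) ≠ 0 := by linarith
  have hIcc : ∑ k ∈ Finset.Icc n n, 1/(k:ℝ) = 1/(n:ℝ) := by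
    rw [Finset.Icc_self, Finset.sum_singleton]
  -- column sums are 1
  have hcol : ∀ j : Fin n, ∑ i : Fin n, K i j = 1 := by
    intro j
    have h1 : ∀ i : Fin n, K i j
        = (1/(n:ℝ)) * ∑ k ∈ Finset.Icc (max i.val j.val + 1) n, 1/(k:ℝ)
          + (if i = j then ((j.val:ℝ))/n else 0) := by
      intro i
      rw [hK i j]
      by_cases h : i = j
      · subst h; simp [Nat.max_self]
      · rw [if_neg h, if_neg h, add_zero]
        by_cases h2 : j < i
        · rw [if_pos h2]
          have hv : j.val < i.val := h2
          have : max i.val j.val = i.val := Nat.max_eq_left (le_of_lt hv)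
          rw [this]
        · rw [if_neg h2]
          have hv : i.val < j.val := by
            have h3 : i.val ≠ j.val := fun hh => h (Fin.ext hh)
            have h4 : ¬ (j.val < i.val) := h2
            omega
          have : max i.val j.val = j.val := Nat.max_eq_right (le_of_lt hv)
          rw [this]
    have h2 : ∀ i : Fin n,
        ∑ k ∈ Finset.Icc (max i.val j.val + 1) n, 1/(k:ℝ)
          = ∑ k ∈ Finset.Icc (j.val + 1) n, (if i.val < k then 1/(k:ℝ) else 0) := by
      intro i
      rw [← Finset.sum_filter]
      congr 1
      ext k
      simp only [Finset.mem_Icc, Finset.mem_filter]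
      omega
    have h3 : ∀ k ∈ Finset.Icc (j.val + 1) n,
        ∑ i : Fin n, (if i.val < k then 1/(k:ℝ) else 0) = 1 := by
      intro k hk
      rw [Finset.mem_Icc] at hk
      rw [Fin.sum_univ_eq_sum_range (fun i => if i < k then 1/(k:ℝ) else 0) n,
        ← Finset.sum_filter]
      have : (Finset.range n).filter (· < k) = Finset.range k := by
        ext m; simp only [Finset.mem_filter, Finset.mem_range]; omega
      rw [this, Finset.sum_const, Finset.card_range, nsmul_eq_mul]
      have hk0 : (k:ℝ) ≠ 0 := by
        have : 0 < k := by omega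
        positivity
      field_simp
    calc ∑ i : Fin n, K i j
        = (∑ i : Fin n, (1/(n:ℝ)) * ∑ k ∈ Finset.Icc (j.val + 1) n,
            (if i.val < k then 1/(k:ℝ) else 0)) + ((j.val:ℝ))/n := by
          rw [Finset.sum_congr rfl (fun i _ => by rw [h1 i, h2 i]),
            Finset.sum_add_distrib, Finset.sum_ite_eq' Finset.univ j,
            if_pos (Finset.mem_univ j)]
      _ = (1/(n:ℝ)) * (∑ i : Fin n, ∑ k ∈ Finset.Icc (j.val + 1) n,
            (if i.val < k then 1/(k:ℝ) else 0)) + ((j.val:ℝ))/n := by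
          rw [Finset.mul_sum]
      _ = (1/(n:ℝ)) * (∑ k ∈ Finset.Icc (j.val + 1) n, (1:ℝ)) + ((j.val:ℝ))/n := by
          rw [Finset.sum_comm, Finset.sum_congr rfl h3]
      _ = 1 := by
          rw [Finset.sum_const, Nat.card_Icc, nsmul_eq_mul, mul_one]
          have hjn : j.val + 1 ≤ n := j.isLt
          have : ((n + 1 - (j.val + 1) : ℕ) : ℝ) = (n:ℝ) - (j.val:ℝ) := by
            rw [show n + 1 - (j.val + 1) = n - j.val by omega,
              Nat.cast_sub (by omega : j.val ≤ n)]
          rw [this]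
          field_simp
          ring
  -- the eigenvector relation for row i0
  have hrow : ∀ j : Fin n, K i0 j
      = 1/(n:ℝ) + (1 - 1/(n:ℝ)) * ((if j = i0 then (1:ℝ) else 0) - 1/(n:ℝ)) := by
    intro j
    have hi0v : (i0 : ℕ) = n - 1 := rfl
    have hi0s : (i0 : ℕ) + 1 = n := by omega
    rw [hK i0 j]
    by_cases h : i0 = j
    · rw [if_pos h, if_pos h.symm, ← h, hi0s, hIcc]
      have : ((i0 : ℕ) : ℝ) = (n:ℝ) - 1 := by
        rw [hi0v]
        push_cast [Nat.cast_sub (by omega : 1 ≤ n)]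
        ring
      rw [this]
      field_simp
      ring
    · have hjv : j.val < (i0 : ℕ) := by
        have : j.val ≠ (i0 : ℕ) := fun hh => h (Fin.ext hh.symm)
        have := j.isLt
        omega
      rw [if_neg h, if_pos (show j < i0 from hjv), hi0s, hIcc,
        if_neg (fun hh => h hh.symm)]
      field_simp
      ring
  -- the main induction
  have key : ∀ s : ℕ, ∀ j : Fin n, (K ^ s) i0 j
      = 1/(n:ℝ) + (1 - 1/(n:ℝ))^s * ((if j = i0 then (1:ℝ) else 0) - 1/(n:ℝ)) := by
    intro s
    induction s with
    | zero =>
      intro j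
      rw [pow_zero, Matrix.one_apply, pow_zero, one_mul]
      by_cases h : j = i0
      · rw [if_pos h.symm, if_pos h]; ring
      · rw [if_neg (fun hh => h hh.symm), if_neg h]; ring
    | succ s ih =>
      intro j
      rw [pow_succ, Matrix.mul_apply]
      have hsum : ∀ i : Fin n, (K ^ s) i0 i * K i j
          = (1/(n:ℝ) - (1 - 1/(n:ℝ))^s * (1/(n:ℝ))) * K i j
            + (1 - 1/(n:ℝ))^s * (if i = i0 then K i j else 0) := by
        intro i
        rw [ih i]
        by_cases h : i = i0
        · rw [if_pos h, if_pos h]; ring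
        · rw [if_neg h, if_neg h]; ring
      rw [Finset.sum_congr rfl (fun i _ => hsum i), Finset.sum_add_distrib,
        ← Finset.mul_sum, ← Finset.mul_sum, hcol j,
        Finset.sum_ite_eq' Finset.univ i0, if_pos (Finset.mem_univ i0), hrow j]
      ring
  -- conclude
  have hterm : ∀ j : Fin n, ((K ^ t) i0 j - 1/(n:ℝ))^2
      = (1 - 1/(n:ℝ))^(2*t) * (1/(n:ℝ)^2 + (if j = i0 then 1 - 2/(n:ℝ) else 0)) := by
    intro j
    rw [key t j]
    by_cases h : j = i0 <;> simp [h] <;> ring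
  rw [Finset.sum_congr rfl (fun j _ => hterm j), ← Finset.mul_sum,
    Finset.sum_add_distrib, Finset.sum_const, Finset.card_univ, Fintype.card_fin,
    Finset.sum_ite_eq' Finset.univ i0, if_pos (Finset.mem_univ i0), nsmul_eq_mul]
  field_simp
  ring
end

section
/- For the hit-and-run top-to-random measure q on S_n, the L² distance from uniform satisfies the lower bound d₂(q^{(t)}, u) ≥ √(n−1) · (1 − 1/n)^t for all t ≥ 1. -/
open Finset

private lemma predmod0 {i a : ℕ} (hi : 0 < i) (ha : 0 < a) (h0 : a % i = 0) :
    (a - 1) % i = i - 1 := by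
  obtain ⟨q, hq⟩ := Nat.dvd_of_mod_eq_zero h0
  rcases q with _ | q
  · simp at hq; omega
  · have hm : a = i * q + i := by rw [hq]; ring
    set m := i * q with hmdef
    have h1 : a - 1 = m + (i - 1) := by omega
    rw [h1, hmdef, Nat.mul_add_mod]
    exact Nat.mod_eq_of_lt (by omega)

private lemma predmod1 {i a : ℕ} (h0 : a % i ≠ 0) :
    (a - 1) % i = a % i - 1 := by
  rcases Nat.eq_zero_or_pos i with hi | hi
  · subst hi; simp [Nat.mod_zero]
  · have h1 := Nat.div_add_mod a i
    have h2 : a % i < i := Nat.mod_lt _ hi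
    set m := i * (a / i) with hmdef
    have h3 : a - 1 = m + (a % i - 1) := by omega
    rw [h3, hmdef, Nat.mul_add_mod]
    exact Nat.mod_eq_of_lt (by omega)

private lemma card_fix {n : ℕ} (e : Fin n) :
    (Finset.univ.filter (fun π : Equiv.Perm (Fin n) => π e = e)).card = Nat.factorial (n - 1) := by
  rw [← Fintype.card_subtype]
  have h1 : {π : Equiv.Perm (Fin n) // π e = e} ≃ Equiv.Perm {x : Fin n // x ≠ e} := by
    refine Equiv.trans ?_ (Equiv.Perm.subtypeEquivSubtypePerm (fun x => x ≠ e)).symm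
    refine Equiv.subtypeEquivRight fun π => ?_
    constructor
    · intro h a ha
      have ha' : a = e := by simpa using ha
      subst ha'; exact h
    · intro h; exact h e (by simp)
  rw [Fintype.card_congr h1, Fintype.card_perm]
  congr 1
  have h2 : Fintype.card {x : Fin n // x ≠ e} = n - 1 := by
    have := Fintype.card_subtype_compl (fun x : Fin n => x = e)
    simp only [Fintype.card_subtype_eq, Fintype.card_fin] at this
    convert this using 2
  exact h2

/-- For the hit-and-run top-to-random measure q on S_n,
d₂(q^{(t)}, u) ≥ √(n−1) · (1 − 1/n)^t for all t ≥ 1. -/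
theorem stmt_17 (n : ℕ) (hn : 2 ≤ n)
    (σ : ℕ → Equiv.Perm (Fin n))
    (hσ : ∀ (kk : ℕ) (hk1 : 1 ≤ kk) (hk2 : kk ≤ n) (x : Fin n),
      σ kk x =
        if x.val + 1 ≤ kk then
          (if x.val = 0 then (⟨kk - 1, by omega⟩ : Fin n)
           else (⟨x.val - 1, by omega⟩ : Fin n))
        else x)
    (q : Equiv.Perm (Fin n) → ℝ)
    (hq : ∀ π : Equiv.Perm (Fin n),
      q π = (1 / (n : ℝ)) * ∑ i ∈ Finset.Icc 1 n,
        (1 / (i : ℝ)) * ∑ j ∈ Finset.range i,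
          (if π = (σ i) ^ j then (1 : ℝ) else 0))
    (qt : ℕ → Equiv.Perm (Fin n) → ℝ)
    (hqt0 : ∀ π, qt 0 π = if π = 1 then 1 else 0)
    (hqts : ∀ (t : ℕ) (π : Equiv.Perm (Fin n)),
      qt (t + 1) π = ∑ ρ : Equiv.Perm (Fin n), qt t ρ * q (ρ⁻¹ * π))
    (t : ℕ) (ht : 1 ≤ t) :
    Real.sqrt ((Fintype.card (Equiv.Perm (Fin n)) : ℝ) *
        ∑ π : Equiv.Perm (Fin n),
          (qt t π - 1 / (Fintype.card (Equiv.Perm (Fin n)) : ℝ)) ^ 2) ≥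
      Real.sqrt ((n : ℝ) - 1) * (1 - 1 / (n : ℝ)) ^ t := by
  classical
  set e : Fin n := ⟨n - 1, by omega⟩ with he
  have heval : e.val = n - 1 := rfl
  -- fixed points
  have hfix : ∀ i, 1 ≤ i → i < n → ∀ j, ((σ i) ^ j) e = e := by
    intro i h1 h2 j
    induction j with
    | zero => simp
    | succ j ih =>
      rw [pow_succ, Equiv.Perm.mul_apply]
      rw [hσ i h1 (by omega) e, if_neg (by rw [heval]; omega)]
      exact ih
  -- power formula
  have hpow : ∀ i, 1 ≤ i → i ≤ n → ∀ j, j ≤ i → ∀ x : Fin n, x.val < i →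
      (((σ i) ^ j) x).val = (x.val + i - j) % i := by
    intro i h1 h2 j
    induction j with
    | zero =>
      intro _ x hx
      simp [Nat.add_mod_right, Nat.mod_eq_of_lt hx]
    | succ j ih =>
      intro hj x hx
      have hj' : j ≤ i := by omega
      have hy := ih hj' x hx
      have hylt : (((σ i) ^ j) x).val < i := by rw [hy]; exact Nat.mod_lt _ h1
      rw [pow_succ', Equiv.Perm.mul_apply]
      set y := ((σ i) ^ j) x with hydef
      rw [hσ i h1 h2 y, if_pos (by omega : y.val + 1 ≤ i)]
      by_cases h0 : y.val = 0
      · rw [if_pos h0]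
        show i - 1 = (x.val + i - (j + 1)) % i
        have ha : 0 < x.val + i - j := by omega
        have h0' : (x.val + i - j) % i = 0 := by rw [← hy, h0]
        have hstep : x.val + i - (j + 1) = (x.val + i - j) - 1 := by omega
        rw [hstep, predmod0 h1 ha h0']
      · rw [if_neg h0]
        show y.val - 1 = (x.val + i - (j + 1)) % i
        have h0' : (x.val + i - j) % i ≠ 0 := by rw [← hy]; exact h0
        have hstep : x.val + i - (j + 1) = (x.val + i - j) - 1 := by omega
        rw [hstep, predmod1 h0', ← hy]
  -- swap sums
  have hswap : ∀ X : Equiv.Perm (Fin n) → ℝ,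
      (∑ g : Equiv.Perm (Fin n), q g * X g)
        = (1 / (n : ℝ)) * ∑ i ∈ Icc 1 n, (1 / (i : ℝ)) * ∑ j ∈ range i, X ((σ i) ^ j) := by
    intro X
    have h1 : ∀ g : Equiv.Perm (Fin n), q g * X g
        = ∑ i ∈ Icc 1 n, ∑ j ∈ range i,
            (1 / (n : ℝ)) * ((1 / (i : ℝ)) * (if g = (σ i) ^ j then X g else 0)) := by
      intro g
      rw [hq g]
      simp only [Finset.mul_sum, Finset.sum_mul, ite_mul, one_mul, zero_mul, mul_assoc]
    rw [Finset.sum_congr rfl fun g _ => h1 g, Finset.sum_comm]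
    rw [Finset.mul_sum]
    refine Finset.sum_congr rfl fun i hi => ?_
    rw [Finset.sum_comm, Finset.mul_sum, Finset.mul_sum]
    refine Finset.sum_congr rfl fun j hj => ?_
    have h2 : (∑ g : Equiv.Perm (Fin n), if g = (σ i) ^ j then X g else 0)
        = X ((σ i) ^ j) := by
      rw [Finset.sum_ite_eq' Finset.univ ((σ i) ^ j) X]
      simp
    rw [← h2, Finset.mul_sum, Finset.mul_sum]
  -- total mass
  have hq1 : (∑ g : Equiv.Perm (Fin n), q g) = 1 := by
    have h := hswap (fun _ => 1)
    simp only [mul_one] at h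
    rw [h]
    have h2 : ∀ i ∈ Icc 1 n, (1 / (i : ℝ)) * ∑ j ∈ range i, (1 : ℝ) = 1 := by
      intro i hi
      rw [Finset.mem_Icc] at hi
      rw [Finset.sum_const, card_range, nsmul_eq_mul, mul_one]
      exact one_div_mul_cancel (Nat.cast_ne_zero.mpr (by omega))
    rw [Finset.sum_congr rfl h2, Finset.sum_const, Nat.card_Icc, nsmul_eq_mul, mul_one]
    have h3 : n + 1 - 1 = n := by omega
    rw [h3]
    exact one_div_mul_cancel (Nat.cast_ne_zero.mpr (by omega))
  -- inner sums
  have hstep_lt : ∀ i, 1 ≤ i → i < n → ∀ c : Fin n,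
      (∑ j ∈ range i, (if ((σ i) ^ j) e = c then (1 : ℝ) else 0))
        = (i : ℝ) * (if c = e then (1 : ℝ) else 0) := by
    intro i h1 h2 c
    have h3 : ∀ j ∈ range i,
        (if ((σ i) ^ j) e = c then (1 : ℝ) else 0) = (if c = e then (1 : ℝ) else 0) := by
      intro j _
      rw [hfix i h1 h2 j]
      rcases eq_or_ne c e with h | h
      · rw [if_pos h.symm, if_pos h]
      · rw [if_neg (Ne.symm h), if_neg h]
    rw [Finset.sum_congr rfl h3, Finset.sum_const, card_range, nsmul_eq_mul]
  have hstep_n : ∀ c : Fin n,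
      (∑ j ∈ range n, (if ((σ n) ^ j) e = c then (1 : ℝ) else 0)) = 1 := by
    intro c
    have hval : ∀ j ∈ range n, ((((σ n) ^ j) e = c)) ↔ (j = n - 1 - c.val) := by
      intro j hj
      rw [Finset.mem_range] at hj
      have h1 : (((σ n) ^ j) e).val = (e.val + n - j) % n :=
        hpow n (by omega) le_rfl j (by omega) e (by rw [heval]; omega)
      have h2 : (e.val + n - j) % n = n - 1 - j := by
        rw [heval]
        have h4 : n - 1 + n - j = (n - 1 - j) + n := by omega
        rw [h4, Nat.add_mod_right]
        exact Nat.mod_eq_of_lt (by omega)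
      have hc := c.isLt
      rw [Fin.ext_iff, h1, h2]
      omega
    have h6 : ∀ j ∈ range n,
        (if ((σ n) ^ j) e = c then (1 : ℝ) else 0)
          = (if j = n - 1 - c.val then (1 : ℝ) else 0) := by
      intro j hj
      rw [if_congr (hval j hj) rfl rfl]
    rw [Finset.sum_congr rfl h6,
      Finset.sum_ite_eq' (range n) (n - 1 - c.val) (fun _ => (1 : ℝ))]
    rw [if_pos (Finset.mem_range.mpr (by omega))]
  -- the main eigen-sum
  have hind : ∀ c : Fin n,
      (∑ g : Equiv.Perm (Fin n), q g * (if g e = c then (1 : ℝ) else 0))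
        = (1 / (n : ℝ)) * (((n : ℝ) - 1) * (if c = e then (1 : ℝ) else 0) + 1 / n) := by
    intro c
    rw [hswap (fun g => if g e = c then (1 : ℝ) else 0)]
    congr 1
    have hsplit : Icc 1 n = insert n (Icc 1 (n - 1)) := by
      ext x
      simp only [Finset.mem_Icc, Finset.mem_insert]
      omega
    rw [hsplit, Finset.sum_insert (by simp only [Finset.mem_Icc]; omega)]
    rw [hstep_n c]
    have h7 : ∀ i ∈ Icc 1 (n - 1),
        (1 / (i : ℝ)) * ∑ j ∈ range i, (if ((σ i) ^ j) e = c then (1 : ℝ) else 0)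
          = (if c = e then (1 : ℝ) else 0) := by
      intro i hi
      rw [Finset.mem_Icc] at hi
      rw [hstep_lt i hi.1 (by omega) c, ← mul_assoc,
        one_div_mul_cancel (Nat.cast_ne_zero.mpr (by omega) : (i : ℝ) ≠ 0), one_mul]
    rw [Finset.sum_congr rfl h7, Finset.sum_const, Nat.card_Icc, nsmul_eq_mul]
    have h8 : n - 1 + 1 - 1 = n - 1 := by omega
    rw [h8, mul_one, Nat.cast_sub (by omega : 1 ≤ n), Nat.cast_one]
    ring
  set lam : ℝ := 1 - 1 / (n : ℝ) with hlam
  set f : Equiv.Perm (Fin n) → ℝ :=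
    fun π => (if π e = e then (1 : ℝ) else 0) - 1 / n with hf
  have hn0 : (n : ℝ) ≠ 0 := Nat.cast_ne_zero.mpr (by omega)
  have hn1 : (1 : ℝ) < (n : ℝ) := by exact_mod_cast (by omega : 1 < n)
  -- the eigenvalue equation
  have hKEY : ∀ ρ : Equiv.Perm (Fin n),
      (∑ g : Equiv.Perm (Fin n), q g * f (ρ * g)) = lam * f ρ := by
    intro ρ
    have h1 : ∀ g : Equiv.Perm (Fin n),
        f (ρ * g) = (if g e = ρ⁻¹ e then (1 : ℝ) else 0) - 1 / n := by
      intro g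
      simp only [hf]
      have h2 : ((ρ * g) e = e) ↔ (g e = ρ⁻¹ e) := by
        rw [Equiv.Perm.mul_apply, Equiv.Perm.inv_def, Equiv.eq_symm_apply]
      rw [if_congr h2 rfl rfl]
    calc (∑ g : Equiv.Perm (Fin n), q g * f (ρ * g))
        = ∑ g : Equiv.Perm (Fin n),
            (q g * (if g e = ρ⁻¹ e then (1 : ℝ) else 0) - q g * (1 / n)) :=
          Finset.sum_congr rfl fun g _ => by rw [h1 g, mul_sub]
      _ = (∑ g : Equiv.Perm (Fin n), q g * (if g e = ρ⁻¹ e then (1 : ℝ) else 0))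
            - (∑ g : Equiv.Perm (Fin n), q g) * (1 / n) := by
          rw [Finset.sum_sub_distrib, Finset.sum_mul]
      _ = (1 / (n : ℝ)) * (((n : ℝ) - 1) * (if ρ⁻¹ e = e then (1 : ℝ) else 0) + 1 / n)
            - 1 / n := by rw [hind, hq1, one_mul]
      _ = lam * f ρ := by
          have h3 : (ρ⁻¹ e = e) ↔ (ρ e = e) := by
            rw [Equiv.Perm.inv_def, Equiv.symm_apply_eq, eq_comm]
          rw [if_congr h3 rfl rfl]
          simp only [hf, hlam]
          rcases eq_or_ne (ρ e) e with h | h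
          · rw [if_pos h]; field_simp; try ring
          · rw [if_neg h]; field_simp; try ring
  -- evolution of the test sum
  have hA : ∀ s : ℕ, (∑ π : Equiv.Perm (Fin n), qt s π * f π) = lam ^ s * lam := by
    intro s
    induction s with
    | zero =>
      rw [pow_zero, one_mul]
      have h1 : ∀ π : Equiv.Perm (Fin n),
          qt 0 π * f π = (if π = 1 then f π else 0) := by
        intro π
        rw [hqt0]
        rcases eq_or_ne π 1 with h | h
        · rw [if_pos h, if_pos h, one_mul]
        · rw [if_neg h, if_neg h, zero_mul]
      rw [Finset.sum_congr rfl fun π _ => h1 π,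
        Finset.sum_ite_eq' Finset.univ (1 : Equiv.Perm (Fin n)) f,
        if_pos (Finset.mem_univ _)]
      simp [hf, hlam]
    | succ s ih =>
      calc (∑ π : Equiv.Perm (Fin n), qt (s + 1) π * f π)
          = ∑ π : Equiv.Perm (Fin n),
              (∑ ρ : Equiv.Perm (Fin n), qt s ρ * q (ρ⁻¹ * π)) * f π :=
            Finset.sum_congr rfl fun π _ => by rw [hqts]
        _ = ∑ ρ : Equiv.Perm (Fin n), qt s ρ *
              (∑ π : Equiv.Perm (Fin n), q (ρ⁻¹ * π) * f π) := by
            simp only [Finset.sum_mul, Finset.mul_sum, mul_assoc]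
            exact Finset.sum_comm
        _ = ∑ ρ : Equiv.Perm (Fin n), qt s ρ * (lam * f ρ) := by
            refine Finset.sum_congr rfl fun ρ _ => ?_
            congr 1
            rw [← hKEY ρ]
            refine (Fintype.sum_equiv (Equiv.mulLeft ρ)
              (fun g => q g * f (ρ * g)) (fun π => q (ρ⁻¹ * π) * f π) fun g => ?_).symm
            simp [Equiv.mulLeft, inv_mul_cancel_left]
        _ = lam ^ (s + 1) * lam := by
            have h2 : ∀ ρ : Equiv.Perm (Fin n),
                qt s ρ * (lam * f ρ) = lam * (qt s ρ * f ρ) := fun ρ => by ring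
            rw [Finset.sum_congr rfl fun ρ _ => h2 ρ, ← Finset.mul_sum, ih]
            ring
  -- counting sums
  have hfact : (n : ℝ) * (Nat.factorial (n - 1) : ℝ) = (Nat.factorial n : ℝ) := by
    exact_mod_cast congrArg (Nat.cast (R := ℝ)) (Nat.mul_factorial_pred (by omega))
  have hCsum : (∑ π : Equiv.Perm (Fin n), (if π e = e then (1 : ℝ) else 0))
      = (Nat.factorial (n - 1) : ℝ) := by
    rw [Finset.sum_boole]
    exact_mod_cast congrArg (Nat.cast (R := ℝ)) (card_fix e)
  have hNval : (Fintype.card (Equiv.Perm (Fin n)) : ℝ) = (Nat.factorial n : ℝ) := by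
    rw [Fintype.card_perm, Fintype.card_fin]
  have hFsum : (∑ π : Equiv.Perm (Fin n), f π) = 0 := by
    simp only [hf]
    rw [Finset.sum_sub_distrib, hCsum, Finset.sum_const, Finset.card_univ,
      nsmul_eq_mul, hNval, mul_one_div, ← hfact]
    field_simp
    simp
  have hF2sum : (∑ π : Equiv.Perm (Fin n), f π ^ 2)
      = (Nat.factorial n : ℝ) * ((n : ℝ) - 1) / (n : ℝ) ^ 2 := by
    have h1 : ∀ π : Equiv.Perm (Fin n), f π ^ 2
        = (if π e = e then (1 : ℝ) else 0) * (1 - 2 / n) + 1 / (n : ℝ) ^ 2 := by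
      intro π
      simp only [hf]
      rcases eq_or_ne (π e) e with h | h
      · rw [if_pos h]; field_simp; try ring
      · rw [if_neg h]; field_simp; try ring
    rw [Finset.sum_congr rfl fun π _ => h1 π, Finset.sum_add_distrib,
      ← Finset.sum_mul, hCsum, Finset.sum_const, Finset.card_univ, nsmul_eq_mul,
      hNval, mul_one_div]
    have h2 : (Nat.factorial (n - 1) : ℝ) = (Nat.factorial n : ℝ) / n := by
      rw [← hfact]; field_simp
    rw [h2]
    field_simp
    ring
  -- Cauchy–Schwarz
  have hS1 : (∑ π : Equiv.Perm (Fin n),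
      (qt t π - 1 / (Fintype.card (Equiv.Perm (Fin n)) : ℝ)) * f π) = lam ^ t * lam := by
    have h1 : ∀ π : Equiv.Perm (Fin n),
        (qt t π - 1 / (Fintype.card (Equiv.Perm (Fin n)) : ℝ)) * f π
          = qt t π * f π - (1 / (Fintype.card (Equiv.Perm (Fin n)) : ℝ)) * f π :=
      fun π => by ring
    rw [Finset.sum_congr rfl fun π _ => h1 π, Finset.sum_sub_distrib, hA t,
      ← Finset.mul_sum, hFsum, mul_zero, sub_zero]
  have hCS := Finset.sum_mul_sq_le_sq_mul_sq Finset.univ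
    (fun π : Equiv.Perm (Fin n) => qt t π - 1 / (Fintype.card (Equiv.Perm (Fin n)) : ℝ)) f
  rw [hS1, hF2sum] at hCS
  -- assemble
  have hlam_nonneg : (0 : ℝ) ≤ lam := by
    rw [hlam, sub_nonneg]
    rw [div_le_one (by linarith)]
    linarith
  have hlamval : lam = ((n : ℝ) - 1) / n := by rw [hlam]; field_simp
  set D : ℝ := ∑ π : Equiv.Perm (Fin n),
    (qt t π - 1 / (Fintype.card (Equiv.Perm (Fin n)) : ℝ)) ^ 2 with hD
  have hND : ((n : ℝ) - 1) * (lam ^ t) ^ 2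
      ≤ (Fintype.card (Equiv.Perm (Fin n)) : ℝ) * D := by
    have hfac_pos : (0 : ℝ) < (Nat.factorial n : ℝ) := by
      exact_mod_cast Nat.factorial_pos n
    have hgt : (0 : ℝ) < (n : ℝ) - 1 := by linarith
    have hne' : (n : ℝ) - 1 ≠ 0 := ne_of_gt hgt
    calc ((n : ℝ) - 1) * (lam ^ t) ^ 2
        = ((lam ^ t * lam) ^ 2) * ((n : ℝ) ^ 2 / ((n : ℝ) - 1)) := by
          rw [hlamval]; field_simp; try ring
      _ ≤ (D * ((Nat.factorial n : ℝ) * ((n : ℝ) - 1) / (n : ℝ) ^ 2))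
            * ((n : ℝ) ^ 2 / ((n : ℝ) - 1)) := by
          refine mul_le_mul_of_nonneg_right hCS ?_
          exact div_nonneg (by positivity) (le_of_lt hgt)
      _ = (Nat.factorial n : ℝ) * D := by field_simp; try ring
      _ = (Fintype.card (Equiv.Perm (Fin n)) : ℝ) * D := by rw [hNval]
  have hrw : Real.sqrt ((n : ℝ) - 1) * lam ^ t
      = Real.sqrt (((n : ℝ) - 1) * (lam ^ t) ^ 2) := by
    rw [Real.sqrt_mul (by linarith) ((lam ^ t) ^ 2),
      Real.sqrt_sq (pow_nonneg hlam_nonneg t)]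
  rw [ge_iff_le, hrw]
  exact Real.sqrt_le_sqrt hND
end

section
/- Let G be a finite group with two symmetric probability measures μ and q whose Dirichlet forms satisfy E_μ ≤ A·E_q for some A > 0. Then the eigenvalues (listed in decreasing order) α_i of convolution by μ and β_i of convolution by q satisfy 1 − β_i ≥ (1/A)(1 − α_i) for all i. -/
open Finset Polynomial

open Matrix

section Aux

open Matrix

lemma aux_charpoly {m : Type*} [Fintype m] [DecidableEq m] (M : Matrix m m ℝ)
    (hM : M.IsHermitian) : M.charpoly = ∏ i : m, (X - C (hM.eigenvalues i)) := by
  set U : Matrix m m ℝ := (hM.eigenvectorUnitary : Matrix m m ℝ) with hU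
  have hUU : U * star U = 1 := (Matrix.mem_unitaryGroup_iff).mp hM.eigenvectorUnitary.2
  have hspec : M = U * Matrix.diagonal hM.eigenvalues * star U := by
    have := hM.spectral_theorem
    simpa [RCLike.ofReal_real_eq_id] using this
  have hchar : charmatrix M =
      (C : ℝ →+* ℝ[X]).mapMatrix U * charmatrix (Matrix.diagonal hM.eigenvalues) *
        (C : ℝ →+* ℝ[X]).mapMatrix (star U) := by
    rw [charmatrix, charmatrix]
    rw [mul_sub, sub_mul]
    congr 1
    · rw [← Matrix.scalar_commute (X : ℝ[X]) (Commute.all X) ((C : ℝ →+* ℝ[X]).mapMatrix U),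
        mul_assoc, ← _root_.map_mul, hUU, _root_.map_one, mul_one]
    · conv_lhs => rw [hspec, _root_.map_mul, _root_.map_mul]
  have hdiag : charmatrix (Matrix.diagonal hM.eigenvalues) =
      Matrix.diagonal (fun i => (X : ℝ[X]) - C (hM.eigenvalues i)) := by
    ext i j
    by_cases h : i = j
    · subst h; simp [charmatrix_apply_eq]
    · simp [charmatrix_apply_ne _ _ _ h, Matrix.diagonal_apply_ne _ h]
  have hdetU : ((C : ℝ →+* ℝ[X]).mapMatrix U).det * ((C : ℝ →+* ℝ[X]).mapMatrix (star U)).det = 1 := by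
    rw [← Matrix.det_mul, ← _root_.map_mul, hUU, _root_.map_one, Matrix.det_one]
  rw [Matrix.charpoly, hchar, Matrix.det_mul, Matrix.det_mul, hdiag, Matrix.det_diagonal]
  rw [mul_comm (((C : ℝ →+* ℝ[X]).mapMatrix U).det), mul_assoc, hdetU, mul_one]

lemma aux_roots {ι : Type*} [Fintype ι] (f : ι → ℝ) :
    (∏ i : ι, (X - C (f i))).roots = Multiset.map f Finset.univ.val := by
  have h : ∏ i : ι, (X - C (f i))
      = ((Multiset.map f Finset.univ.val).map (fun a => X - C a)).prod := by
    rw [Multiset.map_map]; rfl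
  rw [h, Polynomial.roots_multiset_prod_X_sub_C]

lemma aux_count {n : ℕ} {m : Type*} [Fintype m] (α : Fin n → ℝ) (ev : m → ℝ)
    (h : Multiset.map α Finset.univ.val = Multiset.map ev Finset.univ.val)
    (p : ℝ → Prop) [DecidablePred p] :
    (Finset.univ.filter fun j => p (α j)).card = (Finset.univ.filter fun g => p (ev g)).card := by
  have h2 := congrArg (Multiset.countP p) h
  simp only [Multiset.countP_map] at h2
  rw [Finset.card, Finset.filter_val, Finset.card, Finset.filter_val]
  simpa [Multiset.countP_eq_card_filter, Function.comp] using h2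

lemma aux_coord_zero {m : Type*} [Fintype m] [DecidableEq m]
    (b : OrthonormalBasis m ℝ (EuclideanSpace ℝ m)) (s : Finset m)
    (x : EuclideanSpace ℝ m) (hx : x ∈ Submodule.span ℝ (⇑b '' ↑s)) :
    ∀ j ∉ s, b.repr x j = 0 := by
  intro j hj
  have key : x ∈ LinearMap.ker (((EuclideanSpace.proj j : EuclideanSpace ℝ m →L[ℝ] ℝ) :
      (EuclideanSpace ℝ m) →ₗ[ℝ] ℝ).comp
      (b.repr.toLinearEquiv : EuclideanSpace ℝ m →ₗ[ℝ] EuclideanSpace ℝ m)) := by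
    refine Submodule.span_le.mpr ?_ hx
    rintro _ ⟨k, hk, rfl⟩
    have hrepr : b.repr (b k) = EuclideanSpace.single k (1 : ℝ) := b.repr_self k
    have hne : j ≠ k := fun h => hj (h ▸ hk)
    have heq : (((EuclideanSpace.proj j : EuclideanSpace ℝ m →L[ℝ] ℝ) : (EuclideanSpace ℝ m) →ₗ[ℝ] ℝ).comp
        (b.repr.toLinearEquiv : EuclideanSpace ℝ m →ₗ[ℝ] EuclideanSpace ℝ m)) (b k)
        = b.repr (b k) j := rfl
    simp only [SetLike.mem_coe, LinearMap.mem_ker, heq, hrepr]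
    simp [EuclideanSpace.single_apply, hne]
  exact LinearMap.mem_ker.mp key

lemma aux_quad_le {m : Type*} [Fintype m] [DecidableEq m]
    (M : Matrix m m ℝ) (b : OrthonormalBasis m ℝ (EuclideanSpace ℝ m)) (ev : m → ℝ)
    (hb : ∀ j, M *ᵥ ⇑(b j) = ev j • ⇑(b j)) (s : Finset m) (t : ℝ)
    (hst : ∀ j ∈ s, ev j ≤ t) (x : EuclideanSpace ℝ m)
    (hx : x ∈ Submodule.span ℝ (⇑b '' ↑s)) :
    (inner ℝ x (WithLp.toLp 2 (M *ᵥ x : m → ℝ) : EuclideanSpace ℝ m) : ℝ) ≤ t * (inner ℝ x x : ℝ) := by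
  classical
  set c : m → ℝ := fun j => b.repr x j with hc
  have hc0 : ∀ j ∉ s, c j = 0 := aux_coord_zero b s x hx
  have hxrep : x = ∑ j, c j • (b j : EuclideanSpace ℝ m) := (b.sum_repr x).symm
  have hMx : (WithLp.toLp 2 (M *ᵥ x : m → ℝ) : EuclideanSpace ℝ m)
      = ∑ j, (c j * ev j) • (b j : EuclideanSpace ℝ m) := by
    conv_lhs => rw [hxrep]
    have step : (M *ᵥ (∑ j, c j • (b j : EuclideanSpace ℝ m) : EuclideanSpace ℝ m) : m → ℝ)
        = ∑ j, c j • (M *ᵥ ⇑(b j)) := by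
      rw [show ((∑ j, c j • (b j : EuclideanSpace ℝ m) : EuclideanSpace ℝ m) : m → ℝ)
          = ∑ j, c j • (⇑(b j) : m → ℝ) by simp]
      simp only [← Matrix.mulVecLin_apply, map_sum, _root_.map_smul]
    rw [step]
    apply WithLp.ofLp_injective
    simp only [WithLp.ofLp_toLp, WithLp.ofLp_sum, WithLp.ofLp_smul]
    refine Finset.sum_congr rfl fun j _ => ?_
    rw [hb j, smul_smul]
  have hinner : (inner ℝ x (WithLp.toLp 2 (M *ᵥ x : m → ℝ) : EuclideanSpace ℝ m) : ℝ)
      = ∑ j, c j * (c j * ev j) := by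
    conv_lhs => rw [hMx, hxrep]
    simpa using b.orthonormal.inner_sum c (fun j => c j * ev j) univ
  have hnorm : (inner ℝ x x : ℝ) = ∑ j, c j * c j := by
    conv_lhs => rw [hxrep]
    simpa using b.orthonormal.inner_sum c c univ
  rw [hinner, hnorm, Finset.mul_sum]
  refine Finset.sum_le_sum fun j _ => ?_
  by_cases hj : j ∈ s
  · nlinarith [hst j hj, mul_self_nonneg (c j)]
  · simp [hc0 j hj]

lemma aux_quad_ge {m : Type*} [Fintype m] [DecidableEq m]
    (M : Matrix m m ℝ) (b : OrthonormalBasis m ℝ (EuclideanSpace ℝ m)) (ev : m → ℝ)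
    (hb : ∀ j, M *ᵥ ⇑(b j) = ev j • ⇑(b j)) (s : Finset m) (t : ℝ)
    (hst : ∀ j ∈ s, t ≤ ev j) (x : EuclideanSpace ℝ m)
    (hx : x ∈ Submodule.span ℝ (⇑b '' ↑s)) :
    t * (inner ℝ x x : ℝ) ≤ (inner ℝ x (WithLp.toLp 2 (M *ᵥ x : m → ℝ) : EuclideanSpace ℝ m) : ℝ) := by
  have hb' : ∀ j, (-M) *ᵥ ⇑(b j) = (-ev) j • ⇑(b j) := by
    intro j
    rw [Matrix.neg_mulVec, hb j]
    simp [neg_smul]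
  have h := aux_quad_le (-M) b (-ev) hb' s (-t)
    (fun j hj => by simpa using neg_le_neg (hst j hj)) x hx
  have hneg : (inner ℝ x (WithLp.toLp 2 ((-M) *ᵥ x : m → ℝ) : EuclideanSpace ℝ m) : ℝ)
      = -(inner ℝ x (WithLp.toLp 2 (M *ᵥ x : m → ℝ) : EuclideanSpace ℝ m) : ℝ) := by
    rw [Matrix.neg_mulVec]
    exact inner_neg_right x (WithLp.toLp 2 (M *ᵥ x : m → ℝ) : EuclideanSpace ℝ m)
  rw [hneg] at h
  linarith

lemma aux_finrank {m : Type*} [Fintype m] [DecidableEq m]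
    (b : OrthonormalBasis m ℝ (EuclideanSpace ℝ m)) (s : Finset m) :
    Module.finrank ℝ (Submodule.span ℝ (⇑b '' ↑s)) = s.card := by
  rw [Set.image_eq_range]
  have h := finrank_span_eq_card (R := ℝ)
    ((b.orthonormal.comp (Subtype.val : ((↑s : Set m)) → m) Subtype.val_injective).linearIndependent)
  simpa [Function.comp_def] using h

lemma aux_inter {m : Type*} [Fintype m] [DecidableEq m]
    (V W : Submodule ℝ (EuclideanSpace ℝ m))
    (h : Module.finrank ℝ (EuclideanSpace ℝ m)
      < Module.finrank ℝ V + Module.finrank ℝ W) :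
    ∃ x : EuclideanSpace ℝ m, x ≠ 0 ∧ x ∈ V ∧ x ∈ W := by
  have hsup := Submodule.finrank_sup_add_finrank_inf_eq V W
  have hle : Module.finrank ℝ ↥(V ⊔ W) ≤ Module.finrank ℝ (EuclideanSpace ℝ m) :=
    Submodule.finrank_le _
  have hpos : 0 < Module.finrank ℝ ↥(V ⊓ W) := by omega
  have : Nontrivial ↥(V ⊓ W) := Module.finrank_pos_iff.mp hpos
  obtain ⟨y, hy⟩ := exists_ne (0 : ↥(V ⊓ W))
  refine ⟨(y : EuclideanSpace ℝ m), fun h0 => hy (Subtype.ext h0),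
    (Submodule.mem_inf.mp y.2).1, (Submodule.mem_inf.mp y.2).2⟩

lemma aux_sum {G : Type*} [Group G] [Fintype G] [DecidableEq G]
    (ν : G → ℝ) (hsum : ∑ g : G, ν g = 1) (M : Matrix G G ℝ)
    (hM : ∀ x y : G, M x y = ν (x⁻¹ * y)) (f : G → ℝ) :
    ∑ x : G, ∑ y : G, (f (x * y) - f x) ^ 2 * ν y
      = 2 * (f ⬝ᵥ f) - 2 * (f ⬝ᵥ (M *ᵥ f)) := by
  have expand : ∀ x y : G, (f (x * y) - f x) ^ 2 * ν y
      = f (x * y) ^ 2 * ν y - 2 * (f x * (f (x * y) * ν y)) + f x ^ 2 * ν y := by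
    intros; ring
  have hT1 : ∑ x : G, ∑ y : G, f (x * y) ^ 2 * ν y = f ⬝ᵥ f := by
    rw [Finset.sum_comm]
    have : ∀ y : G, ∑ x : G, f (x * y) ^ 2 * ν y = (∑ x : G, f x ^ 2) * ν y := by
      intro y
      rw [← Finset.sum_mul]
      congr 1
      exact Equiv.sum_comp (Equiv.mulRight y) (fun z => f z ^ 2)
    simp_rw [this]
    rw [← Finset.mul_sum, hsum, mul_one, dotProduct]
    exact Finset.sum_congr rfl fun g _ => by ring
  have hT2 : ∑ x : G, ∑ y : G, f x * (f (x * y) * ν y) = f ⬝ᵥ (M *ᵥ f) := by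
    refine Finset.sum_congr rfl fun x _ => ?_
    rw [← Finset.mul_sum]
    congr 1
    have : ∑ y : G, f (x * y) * ν y = ∑ z : G, f (x * (x⁻¹ * z)) * ν (x⁻¹ * z) :=
      (Equiv.sum_comp (Equiv.mulLeft x⁻¹) (fun y => f (x * y) * ν y)).symm
    rw [this, Matrix.mulVec, dotProduct]
    refine Finset.sum_congr rfl fun z _ => ?_
    rw [hM]
    simp [mul_comm]
  have hT3 : ∑ x : G, ∑ y : G, f x ^ 2 * ν y = f ⬝ᵥ f := by
    have : ∀ x : G, ∑ y : G, f x ^ 2 * ν y = f x ^ 2 := by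
      intro x; rw [← Finset.mul_sum, hsum, mul_one]
    simp_rw [this, dotProduct]
    exact Finset.sum_congr rfl fun g _ => by ring
  calc ∑ x : G, ∑ y : G, (f (x * y) - f x) ^ 2 * ν y
      = ∑ x : G, ∑ y : G, (f (x * y) ^ 2 * ν y - 2 * (f x * (f (x * y) * ν y))
          + f x ^ 2 * ν y) := by simp_rw [expand]
    _ = (∑ x : G, ∑ y : G, f (x * y) ^ 2 * ν y)
          - 2 * (∑ x : G, ∑ y : G, f x * (f (x * y) * ν y))
          + ∑ x : G, ∑ y : G, f x ^ 2 * ν y := by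
        simp only [Finset.sum_add_distrib, Finset.sum_sub_distrib, ← Finset.mul_sum]
    _ = 2 * (f ⬝ᵥ f) - 2 * (f ⬝ᵥ (M *ᵥ f)) := by rw [hT1, hT2, hT3]; ring

lemma aux_inner_dot {m : Type*} [Fintype m] (x y : EuclideanSpace ℝ m) :
    (inner ℝ x y : ℝ) = (x : m → ℝ) ⬝ᵥ (y : m → ℝ) := by
  rw [PiLp.inner_apply, dotProduct]
  exact Finset.sum_congr rfl fun i _ => by simp [RCLike.inner_apply, mul_comm]

end Aux

/-- Dirichlet form comparison: if E_μ ≤ A·E_q, then the decreasingly ordered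
eigenvalues α_i of convolution by μ and β_i of convolution by q satisfy
1 − β_i ≥ (1/A)(1 − α_i) for all i. -/
theorem stmt_18 (G : Type*) [Group G] [Fintype G] [DecidableEq G]
    (μ q : G → ℝ)
    (hμpos : ∀ g, 0 ≤ μ g) (hμsum : ∑ g : G, μ g = 1) (hμsymm : ∀ g, μ g = μ g⁻¹)
    (hqpos : ∀ g, 0 ≤ q g) (hqsum : ∑ g : G, q g = 1) (hqsymm : ∀ g, q g = q g⁻¹)
    (A : ℝ) (hA : 0 < A)
    (hcomp : ∀ f : G → ℝ,
      (1 / (2 * (Fintype.card G : ℝ))) *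
          ∑ x : G, ∑ y : G, (f (x * y) - f x) ^ 2 * μ y ≤
        A * ((1 / (2 * (Fintype.card G : ℝ))) *
          ∑ x : G, ∑ y : G, (f (x * y) - f x) ^ 2 * q y))
    (Mμ Mq : Matrix G G ℝ)
    (hMμ : ∀ x y : G, Mμ x y = μ (x⁻¹ * y))
    (hMq : ∀ x y : G, Mq x y = q (x⁻¹ * y))
    (α β : Fin (Fintype.card G) → ℝ)
    (hα : Mμ.charpoly = ∏ i : Fin (Fintype.card G), (X - C (α i)))
    (hβ : Mq.charpoly = ∏ i : Fin (Fintype.card G), (X - C (β i)))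
    (hαdec : ∀ i j : Fin (Fintype.card G), i ≤ j → α j ≤ α i)
    (hβdec : ∀ i j : Fin (Fintype.card G), i ≤ j → β j ≤ β i) :
    ∀ i : Fin (Fintype.card G), 1 - β i ≥ (1 / A) * (1 - α i) := by
  classical
  intro i
  -- Hermitian
  have hμherm : Mμ.IsHermitian := by
    ext x y
    simp only [Matrix.conjTranspose_apply, star_trivial, hMμ]
    rw [hμsymm]
    congr 1
    simp [_root_.mul_inv_rev]
  have hqherm : Mq.IsHermitian := by
    ext x y
    simp only [Matrix.conjTranspose_apply, star_trivial, hMq]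
    rw [hqsymm]
    congr 1
    simp [_root_.mul_inv_rev]
  set evμ := hμherm.eigenvalues with hevμ
  set evq := hqherm.eigenvalues with hevq
  set bμ := hμherm.eigenvectorBasis with hbμdef
  set bq := hqherm.eigenvectorBasis with hbqdef
  have hbμ : ∀ j, Mμ *ᵥ ⇑(bμ j) = evμ j • ⇑(bμ j) := fun j =>
    hμherm.mulVec_eigenvectorBasis j
  have hbq : ∀ j, Mq *ᵥ ⇑(bq j) = evq j • ⇑(bq j) := fun j =>
    hqherm.mulVec_eigenvectorBasis j
  -- eigenvalue multisets
  have hμms : Multiset.map α Finset.univ.val = Multiset.map evμ Finset.univ.val := by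
    have h1 : Mμ.charpoly.roots = Multiset.map α Finset.univ.val := by
      rw [hα, aux_roots]
    have h2 : Mμ.charpoly.roots = Multiset.map evμ Finset.univ.val := by
      rw [aux_charpoly Mμ hμherm, aux_roots]
    rw [← h1, h2]
  have hqms : Multiset.map β Finset.univ.val = Multiset.map evq Finset.univ.val := by
    have h1 : Mq.charpoly.roots = Multiset.map β Finset.univ.val := by
      rw [hβ, aux_roots]
    have h2 : Mq.charpoly.roots = Multiset.map evq Finset.univ.val := by
      rw [aux_charpoly Mq hqherm, aux_roots]
    rw [← h1, h2]
  -- the two finsets of indices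
  set sμ : Finset G := Finset.univ.filter (fun g => evμ g ≤ α i) with hsμ
  set sq : Finset G := Finset.univ.filter (fun g => β i ≤ evq g) with hsq
  have hcardμ : Fintype.card G - (i : ℕ) ≤ sμ.card := by
    have hcount := aux_count α evμ hμms (fun r => r ≤ α i)
    have hsub : Finset.Ici i ⊆ Finset.univ.filter (fun j => α j ≤ α i) := by
      intro j hj
      simp only [Finset.mem_filter, Finset.mem_univ, true_and]
      exact hαdec i j (Finset.mem_Ici.mp hj)
    calc Fintype.card G - (i : ℕ) = (Finset.Ici i).card := (Fin.card_Ici i).symm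
      _ ≤ (Finset.univ.filter (fun j => α j ≤ α i)).card := Finset.card_le_card hsub
      _ = sμ.card := hcount
  have hcardq : (i : ℕ) + 1 ≤ sq.card := by
    have hcount := aux_count β evq hqms (fun r => β i ≤ r)
    have hsub : Finset.Iic i ⊆ Finset.univ.filter (fun j => β i ≤ β j) := by
      intro j hj
      simp only [Finset.mem_filter, Finset.mem_univ, true_and]
      exact hβdec j i (Finset.mem_Iic.mp hj)
    calc (i : ℕ) + 1 = (Finset.Iic i).card := (Fin.card_Iic i).symm
      _ ≤ (Finset.univ.filter (fun j => β i ≤ β j)).card := Finset.card_le_card hsub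
      _ = sq.card := hcount
  -- intersection of spans
  set V : Submodule ℝ (EuclideanSpace ℝ G) := Submodule.span ℝ (⇑bq '' ↑sq) with hV
  set W : Submodule ℝ (EuclideanSpace ℝ G) := Submodule.span ℝ (⇑bμ '' ↑sμ) with hW
  have hdim : Module.finrank ℝ (EuclideanSpace ℝ G)
      < Module.finrank ℝ V + Module.finrank ℝ W := by
    rw [finrank_euclideanSpace, hV, hW, aux_finrank, aux_finrank]
    have := i.isLt
    omega
  obtain ⟨x, hx0, hxV, hxW⟩ := aux_inter V W hdim
  -- quadratic form bounds
  have h1 : (inner ℝ x (WithLp.toLp 2 (Mμ *ᵥ x : G → ℝ) : EuclideanSpace ℝ G) : ℝ)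
      ≤ α i * (inner ℝ x x : ℝ) :=
    aux_quad_le Mμ bμ evμ hbμ sμ (α i)
      (fun j hj => (Finset.mem_filter.mp hj).2) x hxW
  have h2 : β i * (inner ℝ x x : ℝ)
      ≤ (inner ℝ x (WithLp.toLp 2 (Mq *ᵥ x : G → ℝ) : EuclideanSpace ℝ G) : ℝ) :=
    aux_quad_ge Mq bq evq hbq sq (β i)
      (fun j hj => (Finset.mem_filter.mp hj).2) x hxV
  -- Dirichlet comparison
  have hquad : ((x : G → ℝ) ⬝ᵥ (x : G → ℝ)) - (x : G → ℝ) ⬝ᵥ (Mμ *ᵥ (x : G → ℝ))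
      ≤ A * (((x : G → ℝ) ⬝ᵥ (x : G → ℝ)) - (x : G → ℝ) ⬝ᵥ (Mq *ᵥ (x : G → ℝ))) := by
    have hN : (0 : ℝ) < (Fintype.card G : ℝ) := by
      exact_mod_cast Fintype.card_pos
    have h := hcomp (x : G → ℝ)
    rw [aux_sum μ hμsum Mμ hMμ (x : G → ℝ), aux_sum q hqsum Mq hMq (x : G → ℝ)] at h
    have hmul := mul_le_mul_of_nonneg_left h hN.le
    have e1 : (Fintype.card G : ℝ) * ((1 / (2 * (Fintype.card G : ℝ))) *
        (2 * ((x : G → ℝ) ⬝ᵥ (x : G → ℝ)) - 2 * ((x : G → ℝ) ⬝ᵥ (Mμ *ᵥ (x : G → ℝ)))))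
        = ((x : G → ℝ) ⬝ᵥ (x : G → ℝ)) - (x : G → ℝ) ⬝ᵥ (Mμ *ᵥ (x : G → ℝ)) := by
      field_simp
    have e2 : (Fintype.card G : ℝ) * (A * ((1 / (2 * (Fintype.card G : ℝ))) *
        (2 * ((x : G → ℝ) ⬝ᵥ (x : G → ℝ)) - 2 * ((x : G → ℝ) ⬝ᵥ (Mq *ᵥ (x : G → ℝ))))))
        = A * (((x : G → ℝ) ⬝ᵥ (x : G → ℝ)) - (x : G → ℝ) ⬝ᵥ (Mq *ᵥ (x : G → ℝ))) := by
      field_simp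
    rw [e1, e2] at hmul
    exact hmul
  -- convert to inner products
  rw [← aux_inner_dot x x, ← aux_inner_dot x (WithLp.toLp 2 (Mμ *ᵥ (x : G → ℝ) : G → ℝ) : EuclideanSpace ℝ G),
    ← aux_inner_dot x (WithLp.toLp 2 (Mq *ᵥ (x : G → ℝ) : G → ℝ) : EuclideanSpace ℝ G)] at hquad
  have hxx : (0 : ℝ) < (inner ℝ x x : ℝ) := by
    have hnp : 0 < ‖x‖ := norm_pos_iff.mpr hx0
    rw [real_inner_self_eq_norm_sq]
    positivity
  set ip : ℝ := (inner ℝ x x : ℝ)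
  set dμ : ℝ := (inner ℝ x (WithLp.toLp 2 (Mμ *ᵥ x : G → ℝ) : EuclideanSpace ℝ G) : ℝ)
  set dq : ℝ := (inner ℝ x (WithLp.toLp 2 (Mq *ᵥ x : G → ℝ) : EuclideanSpace ℝ G) : ℝ)
  have h3 : A * (ip - dq) ≤ A * (ip - β i * ip) :=
    mul_le_mul_of_nonneg_left (by linarith) hA.le
  have hineq : (1 - α i) * ip ≤ (A * (1 - β i)) * ip := by nlinarith
  have hkey : 1 - α i ≤ A * (1 - β i) := le_of_mul_le_mul_right hineq hxx
  rw [ge_iff_le, one_div, inv_mul_le_iff₀ hA]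
  linarith [hkey]
end
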